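/- For Spin(2r), the tensor product of the standard representation ℂ^{2r} (highest weight e_1) with the irreducible representation of highest weight k(e_1 + … + e_r) decomposes as the direct sum of the irreducibles with highest weights (k+1)e_1 + k(e_2 + … + e_r) and k(e_1 + … + e_{r-1}) + (k-1)e_r. -/

import Mathlib

open Finset

/-- The Weyl alternating sum `A_λ = ∑_{w ∈ W(D_r)} sgn(w) e^{w(λ)}` for the root
system `D_r`, evaluated at `t ∈ ℝ^r` (with `e^μ(t) = exp⟨μ, t⟩`).  The Weyl group of
`D_r` consists of permutations combined with an even number of sign changes
(parametrized by the even-cardinality subset `S` of flipped signs); the sign of such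
an element is the sign of its permutation part. -/
noncomputable def weylAltD (r : ℕ) (lam : Fin r → ℝ) (t : Fin r → ℝ) : ℝ :=
  ∑ σ : Equiv.Perm (Fin r),
    ∑ S ∈ Finset.univ.filter (fun S : Finset (Fin r) => Even S.card),
      ((Equiv.Perm.sign σ : ℤ) : ℝ) *
        Real.exp (∑ i, (if i ∈ S then -lam i else lam i) * t (σ i))

/-- Half-sum of the positive roots `e_i ± e_j` (`i < j`) of `D_r`:
`ρ = (r-1, r-2, …, 1, 0)`. -/
def rhoD (r : ℕ) : Fin r → ℝ := fun i => (r : ℝ) - 1 - (i : ℕ)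

namespace SpinAux

noncomputable def chiStd (r : ℕ) (t : Fin r → ℝ) : ℝ :=
  ∑ j, (Real.exp (t j) + Real.exp (-t j))

def bump (r : ℕ) (lam : Fin r → ℝ) (i₀ : Fin r) (c : ℝ) : Fin r → ℝ :=
  fun i => if i = i₀ then lam i + c else lam i

/-- Vanishing of the alternating sum when two entries are equal. -/
lemma weylAltD_eq_zero_of_eq {r : ℕ} (lam t : Fin r → ℝ) {i j : Fin r}
    (hij : i ≠ j) (h : lam i = lam j) : weylAltD r lam t = 0 := by
  classical
  unfold weylAltD
  rw [← Finset.sum_product']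
  set τ := Equiv.swap i j with hτdef
  have hlamτ : ∀ m, lam (τ m) = lam m := by
    intro m
    rcases eq_or_ne m i with rfl | hmi
    · simpa [hτdef, Equiv.swap_apply_left] using h.symm
    rcases eq_or_ne m j with rfl | hmj
    · simpa [hτdef, Equiv.swap_apply_right] using h
    · simp [hτdef, Equiv.swap_apply_of_ne_of_ne hmi hmj]
  refine Finset.sum_involution
    (fun p _ => (p.1 * τ, p.2.map τ.toEmbedding)) ?_ ?_ ?_ ?_
  · rintro ⟨σ, S⟩ _
    dsimp only
    have hE : (∑ m, (if m ∈ S.map τ.toEmbedding then -lam m else lam m) * t ((σ * τ) m))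
        = ∑ m, (if m ∈ S then -lam m else lam m) * t (σ m) := by
      rw [← Equiv.sum_comp τ
        (fun m => (if m ∈ S.map τ.toEmbedding then -lam m else lam m) * t ((σ * τ) m))]
      refine Finset.sum_congr rfl fun m _ => ?_
      have hττ : τ (τ m) = m := by rw [hτdef]; exact Equiv.swap_apply_self i j m
      simp only [Equiv.Perm.mul_apply, Finset.mem_map_equiv, Equiv.symm_apply_apply,
        hττ, hlamτ]
    have hsign : ((Equiv.Perm.sign (σ * τ) : ℤ) : ℝ) = -((Equiv.Perm.sign σ : ℤ) : ℝ) := by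
      simp [hτdef, Equiv.Perm.sign_swap hij]
    rw [hE, hsign]
    ring
  · rintro ⟨σ, S⟩ _ _
    intro hEq
    have h1 : σ * τ = σ := congrArg Prod.fst hEq
    have h2 : τ = 1 := mul_left_cancel (a := σ) (by rw [mul_one]; exact h1)
    have hji : j = i := by
      have := congrArg (fun e : Equiv.Perm (Fin r) => e i) h2
      simpa [hτdef, Equiv.swap_apply_left] using this
    exact hij hji.symm
  · rintro ⟨σ, S⟩ ha
    simp only [Finset.mem_product, Finset.mem_filter, Finset.mem_univ, true_and] at ha ⊢
    simpa [Finset.card_map] using ha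
  · rintro ⟨σ, S⟩ ha
    have h1 : σ * τ * τ = σ := by rw [mul_assoc, Equiv.swap_mul_self, mul_one]
    have h2 : (S.map τ.toEmbedding).map τ.toEmbedding = S := by
      ext m
      simp [Finset.mem_map_equiv, hτdef, Equiv.swap_apply_self]
    simp only [Prod.mk.injEq]
    exact ⟨h1, h2⟩

/-- Even-cardinality is preserved by the "flip at `i,j`" operation on sign sets. -/
lemma even_card_flip {r : ℕ} {i j : Fin r} (hij : i ≠ j) (S : Finset (Fin r))
    (hS : Even S.card) :
    Even (Finset.univ.filter fun m : Fin r =>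
      if m = i then j ∉ S else if m = j then i ∉ S else m ∈ S).card := by
  classical
  by_cases hi : i ∈ S <;> by_cases hj : j ∈ S
  · have hset : (Finset.univ.filter fun m : Fin r =>
        if m = i then j ∉ S else if m = j then i ∉ S else m ∈ S) = (S.erase i).erase j := by
      ext m
      simp only [Finset.mem_filter, Finset.mem_univ, true_and, Finset.mem_erase]
      split_ifs with h1 h2
      · subst h1; simp [hi, hj, hij]
      · subst h2; simp [hi, hj]
      · simp [h1, h2]
    have h2le : 2 ≤ S.card := Finset.one_lt_card.mpr ⟨i, hi, j, hj, hij⟩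
    rw [hset, Finset.card_erase_of_mem (Finset.mem_erase.mpr ⟨Ne.symm hij, hj⟩),
      Finset.card_erase_of_mem hi]
    rw [Nat.even_iff] at hS ⊢
    omega
  · have hset : (Finset.univ.filter fun m : Fin r =>
        if m = i then j ∉ S else if m = j then i ∉ S else m ∈ S) = S := by
      ext m
      simp only [Finset.mem_filter, Finset.mem_univ, true_and]
      split_ifs with h1 h2
      · subst h1; simp [hi, hj]
      · subst h2; simp [hi, hj]
      · tauto
    rw [hset]; exact hS
  · have hset : (Finset.univ.filter fun m : Fin r =>
        if m = i then j ∉ S else if m = j then i ∉ S else m ∈ S) = S := by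
      ext m
      simp only [Finset.mem_filter, Finset.mem_univ, true_and]
      split_ifs with h1 h2
      · subst h1; simp [hi, hj]
      · subst h2; simp [hi, hj]
      · tauto
    rw [hset]; exact hS
  · have hset : (Finset.univ.filter fun m : Fin r =>
        if m = i then j ∉ S else if m = j then i ∉ S else m ∈ S)
        = insert i (insert j S) := by
      ext m
      simp only [Finset.mem_filter, Finset.mem_univ, true_and, Finset.mem_insert]
      split_ifs with h1 h2
      · subst h1; simp [hi, hj]
      · subst h2; simp [hi, hj]
      · simp [h1, h2]
    rw [hset, Finset.card_insert_of_notMem (by simp [hij, hi]),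
      Finset.card_insert_of_notMem hj]
    rw [Nat.even_iff] at hS ⊢
    omega

/-- Vanishing of the alternating sum when two entries are opposite. -/
lemma weylAltD_eq_zero_of_neg {r : ℕ} (lam t : Fin r → ℝ) {i j : Fin r}
    (hij : i ≠ j) (h : lam i = -lam j) : weylAltD r lam t = 0 := by
  classical
  unfold weylAltD
  rw [← Finset.sum_product']
  set τ := Equiv.swap i j with hτdef
  refine Finset.sum_involution
    (fun p _ => (p.1 * τ, Finset.univ.filter fun m : Fin r =>
      if m = i then j ∉ p.2 else if m = j then i ∉ p.2 else m ∈ p.2)) ?_ ?_ ?_ ?_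
  · rintro ⟨σ, S⟩ _
    dsimp only
    set S' : Finset (Fin r) := Finset.univ.filter fun m : Fin r =>
      if m = i then j ∉ S else if m = j then i ∉ S else m ∈ S with hS'def
    have hmem : ∀ m : Fin r, m ∈ S'
        ↔ (if m = i then j ∉ S else if m = j then i ∉ S else m ∈ S) := by
      intro m; rw [hS'def]; simp
    have hcoef : ∀ m, (if τ m ∈ S' then -lam (τ m) else lam (τ m))
        = (if m ∈ S then -lam m else lam m) := by
      intro m
      by_cases hmi : m = i
      · have hτ : τ m = j := by rw [hmi, hτdef]; exact Equiv.swap_apply_left _ _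
        by_cases hiS : i ∈ S
        · have hj' : j ∉ S' := by rw [hmem j]; simp [Ne.symm hij, hiS]
          rw [hτ, if_neg hj', hmi, if_pos hiS]; linarith
        · have hj' : j ∈ S' := by rw [hmem j]; simp [Ne.symm hij, hiS]
          rw [hτ, if_pos hj', hmi, if_neg hiS]; linarith
      · by_cases hmj : m = j
        · have hτ : τ m = i := by rw [hmj, hτdef]; exact Equiv.swap_apply_right _ _
          by_cases hjS : j ∈ S
          · have hi' : i ∉ S' := by rw [hmem i]; simp [hjS]
            rw [hτ, if_neg hi', hmj, if_pos hjS]; linarith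
          · have hi' : i ∈ S' := by rw [hmem i]; simp [hjS]
            rw [hτ, if_pos hi', hmj, if_neg hjS]; linarith
        · have hτ : τ m = m := by rw [hτdef]; exact Equiv.swap_apply_of_ne_of_ne hmi hmj
          have hm' : m ∈ S' ↔ m ∈ S := by rw [hmem m]; simp [hmi, hmj]
          by_cases hmS : m ∈ S
          · rw [hτ, if_pos (hm'.mpr hmS), if_pos hmS]
          · rw [hτ, if_neg (fun hc => hmS (hm'.mp hc)), if_neg hmS]
    have hE : (∑ m, (if m ∈ S' then -lam m else lam m) * t ((σ * τ) m))
        = ∑ m, (if m ∈ S then -lam m else lam m) * t (σ m) := by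
      rw [← Equiv.sum_comp τ
        (fun m => (if m ∈ S' then -lam m else lam m) * t ((σ * τ) m))]
      refine Finset.sum_congr rfl fun m _ => ?_
      have hττ : τ (τ m) = m := by rw [hτdef]; exact Equiv.swap_apply_self i j m
      rw [hcoef m, Equiv.Perm.mul_apply, hττ]
    have hsign : ((Equiv.Perm.sign (σ * τ) : ℤ) : ℝ) = -((Equiv.Perm.sign σ : ℤ) : ℝ) := by
      simp [hτdef, Equiv.Perm.sign_swap hij]
    rw [hE, hsign]
    ring
  · rintro ⟨σ, S⟩ _ _
    intro hEq
    have h1 : σ * τ = σ := congrArg Prod.fst hEq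
    have h2 : τ = 1 := mul_left_cancel (a := σ) (by rw [mul_one]; exact h1)
    have hji : j = i := by
      have := congrArg (fun e : Equiv.Perm (Fin r) => e i) h2
      simpa [hτdef, Equiv.swap_apply_left] using this
    exact hij hji.symm
  · rintro ⟨σ, S⟩ ha
    simp only [Finset.mem_product, Finset.mem_filter, Finset.mem_univ, true_and] at ha ⊢
    exact even_card_flip hij S ha
  · rintro ⟨σ, S⟩ ha
    dsimp only
    have h1 : σ * τ * τ = σ := by rw [mul_assoc, Equiv.swap_mul_self, mul_one]
    set S' : Finset (Fin r) := Finset.univ.filter fun m : Fin r =>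
      if m = i then j ∉ S else if m = j then i ∉ S else m ∈ S with hS'def
    have hiS' : i ∈ S' ↔ j ∉ S := by rw [hS'def]; simp
    have hjS' : j ∈ S' ↔ i ∉ S := by rw [hS'def]; simp [Ne.symm hij]
    have h2 : (Finset.univ.filter fun m : Fin r =>
        if m = i then j ∉ S' else if m = j then i ∉ S' else m ∈ S') = S := by
      ext m
      simp only [Finset.mem_filter, Finset.mem_univ, true_and]
      split_ifs with hm1 hm2
      · subst hm1; rw [hjS']; tauto
      · subst hm2; rw [hiS']; tauto
      · rw [hS'def]; simp [hm1, hm2]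
    simp only [Prod.mk.injEq]
    exact ⟨h1, h2⟩

/-- Multiplying the alternating sum by the character of the standard representation. -/
lemma mul_chi (r : ℕ) (lam t : Fin r → ℝ) :
    weylAltD r lam t * chiStd r t
      = ∑ i₀ : Fin r,
          (weylAltD r (bump r lam i₀ 1) t + weylAltD r (bump r lam i₀ (-1)) t) := by
  classical
  unfold weylAltD chiStd bump
  simp only [Finset.sum_mul, ← Finset.sum_add_distrib]
  conv_rhs => rw [Finset.sum_comm]
  refine Finset.sum_congr rfl fun σ _ => ?_
  conv_rhs => rw [Finset.sum_comm]
  refine Finset.sum_congr rfl fun S _ => ?_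
  rw [← Equiv.sum_comp σ (fun j => Real.exp (t j) + Real.exp (-t j)), Finset.mul_sum]
  refine Finset.sum_congr rfl fun i₀ _ => ?_
  set E := ∑ m, (if m ∈ S then -lam m else lam m) * t (σ m) with hE
  have key : ∀ c : ℝ,
      (∑ m, (if m ∈ S then -(if m = i₀ then lam m + c else lam m)
              else (if m = i₀ then lam m + c else lam m)) * t (σ m))
        = E + (if i₀ ∈ S then -c else c) * t (σ i₀) := by
    intro c
    have hpt : ∀ m : Fin r, (if m ∈ S then -(if m = i₀ then lam m + c else lam m)
          else (if m = i₀ then lam m + c else lam m)) * t (σ m)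
        = (if m ∈ S then -lam m else lam m) * t (σ m)
          + (if m = i₀ then (if i₀ ∈ S then -c else c) * t (σ m) else 0) := by
      intro m
      by_cases hm : m = i₀
      · subst hm
        by_cases hS' : m ∈ S <;> simp [hS'] <;> ring
      · simp [hm]
    rw [Finset.sum_congr rfl fun m _ => hpt m, Finset.sum_add_distrib,
      Finset.sum_ite_eq' Finset.univ i₀ (fun m => (if i₀ ∈ S then -c else c) * t (σ m))]
    simp [hE]
  rw [key 1, key (-1)]
  by_cases hS' : i₀ ∈ S
  · rw [if_pos hS', if_pos hS']
    rw [show E + -(1:ℝ) * t (σ i₀) = E + -(t (σ i₀)) by ring,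
      show E + -(-1:ℝ) * t (σ i₀) = E + t (σ i₀) by ring,
      Real.exp_add, Real.exp_add]
    ring
  · rw [if_neg hS', if_neg hS']
    rw [show E + (1:ℝ) * t (σ i₀) = E + t (σ i₀) by ring,
      show E + (-1:ℝ) * t (σ i₀) = E + -(t (σ i₀)) by ring,
      Real.exp_add, Real.exp_add]
    ring

lemma vanish_plus {r : ℕ} (a : ℝ) (t : Fin r → ℝ) (i₀ : Fin r) (h0 : (i₀ : ℕ) ≠ 0) :
    weylAltD r (bump r (fun i => a + rhoD r i) i₀ 1) t = 0 := by
  have hlt : (i₀ : ℕ) - 1 < r := by have := i₀.isLt; omega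
  have hne : (⟨(i₀ : ℕ) - 1, hlt⟩ : Fin r) ≠ i₀ := by
    simp only [Ne, Fin.ext_iff]; omega
  refine weylAltD_eq_zero_of_eq _ t hne ?_
  unfold bump
  rw [if_neg hne, if_pos rfl]
  unfold rhoD
  dsimp only
  rw [Nat.cast_sub (by omega : 1 ≤ (i₀ : ℕ))]
  push_cast
  ring

lemma vanish_minus {r : ℕ} (a : ℝ) (t : Fin r → ℝ) (i₀ : Fin r) (h0 : (i₀ : ℕ) + 1 < r) :
    weylAltD r (bump r (fun i => a + rhoD r i) i₀ (-1)) t = 0 := by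
  have hne : (⟨(i₀ : ℕ) + 1, h0⟩ : Fin r) ≠ i₀ := by
    simp only [Ne, Fin.ext_iff]; omega
  refine weylAltD_eq_zero_of_eq _ t (Ne.symm hne) ?_
  unfold bump
  rw [if_pos rfl, if_neg hne]
  unfold rhoD
  dsimp only
  push_cast
  ring

lemma vanish_rho_last {r : ℕ} (hr : 2 ≤ r) (t : Fin r → ℝ) :
    weylAltD r (bump r (fun i => (0:ℝ) + rhoD r i) ⟨r - 1, by omega⟩ (-1)) t = 0 := by
  have h2 : r - 2 < r := by omega
  have hne : (⟨r - 2, h2⟩ : Fin r) ≠ (⟨r - 1, by omega⟩ : Fin r) := by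
    simp only [Ne, Fin.ext_iff]; omega
  refine weylAltD_eq_zero_of_neg _ t hne ?_
  unfold bump
  rw [if_neg hne, if_pos rfl]
  unfold rhoD
  dsimp only
  rw [Nat.cast_sub (by omega : 2 ≤ r), Nat.cast_sub (by omega : 1 ≤ r)]
  push_cast
  ring

lemma chi_general {r : ℕ} (hr : 2 ≤ r) (a : ℝ) (t : Fin r → ℝ) :
    weylAltD r (fun i => a + rhoD r i) t * chiStd r t
      = weylAltD r (bump r (fun i => a + rhoD r i) ⟨0, by omega⟩ 1) t
        + weylAltD r (bump r (fun i => a + rhoD r i) ⟨r - 1, by omega⟩ (-1)) t := by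
  rw [mul_chi, Finset.sum_add_distrib]
  congr 1
  · refine Finset.sum_eq_single_of_mem (⟨0, by omega⟩ : Fin r) (Finset.mem_univ _)
      fun i₀ _ hne => ?_
    refine vanish_plus a t i₀ ?_
    simpa [Fin.ext_iff] using hne
  · refine Finset.sum_eq_single_of_mem (⟨r - 1, by omega⟩ : Fin r) (Finset.mem_univ _)
      fun i₀ _ hne => ?_
    refine vanish_minus a t i₀ ?_
    have hlt := i₀.isLt
    have hne' : (i₀ : ℕ) ≠ r - 1 := by simpa [Fin.ext_iff] using hne
    omega

end SpinAux

open SpinAux in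
/-- For `Spin(2r)`, the tensor product of the standard representation `ℂ^{2r}`
(highest weight `e₁`) with the irreducible representation of highest weight
`k(e₁ + ⋯ + e_r)` is the direct sum of the irreducibles of highest weights
`(k+1)e₁ + k(e₂ + ⋯ + e_r)` and `k(e₁ + ⋯ + e_{r-1}) + (k-1)e_r`.  By the Weyl
character formula (`χ_λ = A_{λ+ρ}/A_ρ`), and since representations of the compact
group `Spin(2r)` are determined by their characters, this is the identity
`A_{e₁+ρ} · A_{k(1,…,1)+ρ} = (A_{μ₁+ρ} + A_{μ₂+ρ}) · A_ρ`. -/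
theorem spin2r_tensor_spinpower_decomp (r k : ℕ) (hr : 2 ≤ r) (hk : 1 ≤ k)
    (t : Fin r → ℝ) :
    let e₁ : Fin r → ℝ := fun i => if (i : ℕ) = 0 then 1 else 0
    let lam : Fin r → ℝ := fun _ => (k : ℝ)
    let μ₁ : Fin r → ℝ := fun i => if (i : ℕ) = 0 then (k : ℝ) + 1 else (k : ℝ)
    let μ₂ : Fin r → ℝ := fun i => if (i : ℕ) = r - 1 then (k : ℝ) - 1 else (k : ℝ)
    weylAltD r (fun i => e₁ i + rhoD r i) t * weylAltD r (fun i => lam i + rhoD r i) t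
      = (weylAltD r (fun i => μ₁ i + rhoD r i) t
          + weylAltD r (fun i => μ₂ i + rhoD r i) t) * weylAltD r (rhoD r) t := by
  intro e₁ lam μ₁ μ₂
  have i0lt : 0 < r := by omega
  have ilastlt : r - 1 < r := by omega
  simp only [e₁, lam, μ₁, μ₂]
  have e1eq : (fun i : Fin r => (if (i : ℕ) = 0 then (1:ℝ) else 0) + rhoD r i)
      = bump r (fun i => (0:ℝ) + rhoD r i) ⟨0, i0lt⟩ 1 := by
    funext i
    unfold bump
    by_cases hi : (i : ℕ) = 0
    · rw [if_pos hi, if_pos (Fin.ext hi : i = ⟨0, i0lt⟩)]; ring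
    · rw [if_neg hi, if_neg (fun hc : i = (⟨0, i0lt⟩ : Fin r) => hi (by rw [hc]))]
  have μ₁eq : (fun i : Fin r => (if (i : ℕ) = 0 then (k:ℝ) + 1 else (k:ℝ)) + rhoD r i)
      = bump r (fun i => (k:ℝ) + rhoD r i) ⟨0, i0lt⟩ 1 := by
    funext i
    unfold bump
    by_cases hi : (i : ℕ) = 0
    · rw [if_pos hi, if_pos (Fin.ext hi : i = ⟨0, i0lt⟩)]; ring
    · rw [if_neg hi, if_neg (fun hc : i = (⟨0, i0lt⟩ : Fin r) => hi (by rw [hc]))]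
  have μ₂eq : (fun i : Fin r => (if (i : ℕ) = r - 1 then (k:ℝ) - 1 else (k:ℝ)) + rhoD r i)
      = bump r (fun i => (k:ℝ) + rhoD r i) ⟨r - 1, ilastlt⟩ (-1) := by
    funext i
    unfold bump
    by_cases hi : (i : ℕ) = r - 1
    · rw [if_pos hi, if_pos (Fin.ext hi : i = ⟨r - 1, ilastlt⟩)]; ring
    · rw [if_neg hi, if_neg (fun hc : i = (⟨r - 1, ilastlt⟩ : Fin r) => hi (by rw [hc]))]
  rw [e1eq, μ₁eq, μ₂eq]
  have h1 : weylAltD r (bump r (fun i => (0:ℝ) + rhoD r i) ⟨0, i0lt⟩ 1) t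
      = weylAltD r (rhoD r) t * chiStd r t := by
    have hc := chi_general (r := r) hr 0 t
    rw [vanish_rho_last hr t, add_zero] at hc
    rw [← hc]
    have hz : (fun i : Fin r => (0:ℝ) + rhoD r i) = rhoD r := by
      funext i; rw [zero_add]
    rw [hz]
  have h2 := chi_general (r := r) hr (k : ℝ) t
  rw [h1, ← h2]
  ring
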